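/- The cross product on ℝ⁷ defined from the imaginary octonions, x × y = Im(x · y) where x, y are purely imaginary octonions, is a compatible cross product: x × y is orthogonal to x and y, and ‖x × y‖² = ‖x‖²‖y‖² − ⟨x,y⟩². -/

import Mathlib

noncomputable section

/-- The octonions, as Cayley–Dickson double of the quaternions. -/
abbrev Oct := Quaternion ℝ × Quaternion ℝ

/-- Octonion multiplication via the Cayley–Dickson construction. -/
def omul (x y : Oct) : Oct :=
  (x.1 * y.1 - star y.2 * x.2, y.2 * x.1 + x.2 * star y.1)

/-- The octonion unit. -/
def oone : Oct := (1, 0)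

/-- The inner product on the octonions induced by the octonion norm. -/
def oinner (x y : Oct) : ℝ :=
  (x.1 * star y.1).re + (x.2 * star y.2).re

/-- An octonion is purely imaginary iff its real part vanishes. -/
def oIm (x : Oct) : Prop := x.1.re = 0

/-- The cross product of imaginary octonions: x × y = Im(x·y) = x·y + ⟨x,y⟩·1. -/
def ocross (x y : Oct) : Oct := omul x y + oinner x y • oone

/-- The cross product of imaginary octonions is a compatible cross product:
it is orthogonal to both factors and satisfies the norm identity. -/
theorem stmt_6 (x y : Oct) (hx : oIm x) (hy : oIm y) :
    oinner (ocross x y) x = 0 ∧ oinner (ocross x y) y = 0 ∧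
    oinner (ocross x y) (ocross x y) = oinner x x * oinner y y - oinner x y ^ 2 := by
  dsimp only [oIm] at hx hy
  simp only [ocross, omul, oinner, oone, Prod.fst, Prod.snd, Prod.mk_add_mk, Prod.smul_mk,
    Quaternion.re_mul, Quaternion.re_star, Quaternion.imI_star, Quaternion.imJ_star,
    Quaternion.imK_star, Quaternion.re_add, Quaternion.re_sub, Quaternion.re_smul,
    Quaternion.imI_mul, Quaternion.imJ_mul, Quaternion.imK_mul,
    Quaternion.imI_add, Quaternion.imJ_add, Quaternion.imK_add,
    Quaternion.imI_sub, Quaternion.imJ_sub, Quaternion.imK_sub,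
    Quaternion.imI_smul, Quaternion.imJ_smul, Quaternion.imK_smul,
    Quaternion.re_one, Quaternion.imI_one, Quaternion.imJ_one, Quaternion.imK_one,
    Quaternion.re_zero, Quaternion.imI_zero, Quaternion.imJ_zero, Quaternion.imK_zero,
    smul_eq_mul, hx, hy]
  refine ⟨by ring, by ring, by ring⟩
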